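/- arXiv:2204.13542 — 8 statements merged into one kernel-verified Lean document; each statement's English description precedes it below -/
import Mathlib

section
/- For any Furstenberg family 𝓕, the block family operation is idempotent: b(b𝓕) = b𝓕. -/
/-- The block family of a family of subsets of ℕ. -/
def blockFamily (F : Set (Set ℕ)) : Set (Set ℕ) :=
  {S | ∃ A ∈ F, ∀ R : Finset ℕ, ↑R ⊆ A → ∃ n, ∀ r ∈ R, r + n ∈ S}

theorem blockFamily_idem (F : Set (Set ℕ))
    (hF : ∀ A ∈ F, ∀ B : Set ℕ, A ⊆ B → B ∈ F) :
    blockFamily (blockFamily F) = blockFamily F := by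
  ext S
  constructor
  · rintro ⟨B, ⟨A, hA, hAB⟩, hBS⟩
    refine ⟨A, hA, fun R hR => ?_⟩
    obtain ⟨m, hm⟩ := hAB R hR
    have hsub : ↑(R.image (· + m)) ⊆ B := by
      intro x hx
      simp only [Finset.coe_image, Set.mem_image, Finset.mem_coe] at hx
      obtain ⟨r, hr, rfl⟩ := hx
      exact hm r hr
    obtain ⟨n, hn⟩ := hBS (R.image (· + m)) hsub
    refine ⟨m + n, fun r hr => ?_⟩
    simpa [add_assoc] using hn (r + m) (Finset.mem_image_of_mem _ hr)
  · rintro ⟨A, hA, h⟩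
    exact ⟨A, ⟨A, hA, fun R hR => ⟨0, fun r hr => by simpa using hR hr⟩⟩, h⟩
end

section
/- If A ⊆ ℕ belongs to the block family of the family of sets with positive upper density, then A has positive upper Banach density. That is, b(upper density) ⊆ upper Banach density. -/
open Classical in
/-- The upper density of a set of natural numbers. -/
noncomputable def upperDensity (A : Set ℕ) : ℝ :=
  Filter.limsup (fun n => (((Finset.Icc 1 n).filter (· ∈ A)).card : ℝ) / n) Filter.atTop

open Classical in
/-- The upper Banach density of a set of natural numbers. -/
noncomputable def upperBanachDensity (A : Set ℕ) : ℝ :=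
  Filter.limsup
    (fun n => ⨆ k : ℕ, (((Finset.Icc k (k + n)).filter (· ∈ A)).card : ℝ) / (n + 1))
    Filter.atTop

open Classical in
theorem blockFamily_upperDensity_subset_upperBanachDensity (A : Set ℕ)
    (hA : A ∈ blockFamily {B : Set ℕ | 0 < upperDensity B}) :
    0 < upperBanachDensity A := by
  obtain ⟨B, hB, htr⟩ := hA
  set d := upperDensity B with hd
  have hd0 : 0 < d := hB
  set g : ℕ → ℝ := fun m => (((Finset.Icc 1 m).filter (· ∈ B)).card : ℝ) / m with hg
  set f : ℕ → ℝ := fun n =>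
    ⨆ k : ℕ, (((Finset.Icc k (k + n)).filter (· ∈ A)).card : ℝ) / (n + 1) with hf
  have hterm : ∀ n k : ℕ, (((Finset.Icc k (k + n)).filter (· ∈ A)).card : ℝ) / (n + 1) ≤ 1 := by
    intro n k
    rw [div_le_one (by positivity)]
    have : ((Finset.Icc k (k + n)).filter (· ∈ A)).card ≤ n + 1 := by
      refine (Finset.card_filter_le _ _).trans ?_
      rw [Nat.card_Icc]; omega
    exact_mod_cast this
  have hbdd : ∀ n : ℕ, BddAbove (Set.range fun k : ℕ =>
      (((Finset.Icc k (k + n)).filter (· ∈ A)).card : ℝ) / (n + 1)) := by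
    intro n; exact ⟨1, by rintro x ⟨k, rfl⟩; exact hterm n k⟩
  have hf1 : ∀ n, f n ≤ 1 := fun n => ciSup_le fun k => hterm n k
  have hcob : Filter.IsCoboundedUnder (· ≤ ·) Filter.atTop g := by
    refine Filter.IsBoundedUnder.isCoboundedUnder_le (Filter.isBoundedUnder_of ⟨0, ?_⟩)
    intro m
    simp only [hg, ge_iff_le]
    positivity
  have hfreq : ∃ᶠ m in Filter.atTop, d / 2 < g m :=
    Filter.frequently_lt_of_lt_limsup hcob (by
      have : Filter.limsup g Filter.atTop = d := rfl
      rw [this]; linarith)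
  have hfreq' : ∃ᶠ n in Filter.atTop, d / 2 ≤ f n := by
    rw [Filter.frequently_atTop] at hfreq ⊢
    intro N
    obtain ⟨m, hm, hgm⟩ := hfreq (N + 1)
    refine ⟨m - 1, by omega, ?_⟩
    set R : Finset ℕ := (Finset.Icc 1 m).filter (· ∈ B) with hR
    have hRB : ↑R ⊆ B := fun x hx => (Finset.mem_filter.mp hx).2
    obtain ⟨t, ht⟩ := htr R hRB
    have himg : R.image (· + t) ⊆ (Finset.Icc (1 + t) ((1 + t) + (m - 1))).filter (· ∈ A) := by
      intro x hx
      obtain ⟨r, hr, rfl⟩ := Finset.mem_image.mp hx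
      have hr' := Finset.mem_filter.mp hr
      have := Finset.mem_Icc.mp hr'.1
      refine Finset.mem_filter.mpr ⟨Finset.mem_Icc.mpr (by omega), ht r hr⟩
    have hcard : R.card ≤ ((Finset.Icc (1 + t) ((1 + t) + (m - 1))).filter (· ∈ A)).card := by
      calc R.card = (R.image (· + t)).card :=
            (Finset.card_image_of_injective _ (add_left_injective t)).symm
        _ ≤ _ := Finset.card_le_card himg
    have hcast : ((m - 1 : ℕ) : ℝ) + 1 = (m : ℝ) := by
      have h1 : (1:ℕ) ≤ m := by omega
      rw [Nat.cast_sub h1]; push_cast; ring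
    have hle : g m ≤ (((Finset.Icc (1 + t) ((1 + t) + (m - 1))).filter (· ∈ A)).card : ℝ)
        / (((m - 1 : ℕ) : ℝ) + 1) := by
      rw [hcast, hg]
      have hm0 : (0:ℝ) < (m:ℝ) := Nat.cast_pos.mpr (by omega)
      rw [div_le_div_iff₀ hm0 hm0]
      have : (R.card : ℝ) ≤ (((Finset.Icc (1 + t) ((1 + t) + (m - 1))).filter (· ∈ A)).card : ℝ) :=
        by exact_mod_cast hcard
      nlinarith
    refine le_trans hgm.le (hle.trans ?_)
    rw [hf]
    exact le_ciSup (hbdd (m - 1)) (1 + t)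
  have hlim : d / 2 ≤ upperBanachDensity A := by
    have : upperBanachDensity A = Filter.limsup f Filter.atTop := rfl
    rw [this]
    exact Filter.le_limsup_of_frequently_le hfreq' (Filter.isBoundedUnder_of ⟨1, hf1⟩)
  linarith
end

section
/- The block family of the family of syndetic subsets of ℕ is contained in the family of piecewise syndetic sets: if A ∈ b(Syn) then A is piecewise syndetic. -/
/-- A subset of ℕ is thick if it contains arbitrarily long intervals. -/
def Thick (A : Set ℕ) : Prop := ∀ L : ℕ, ∃ a : ℕ, ∀ i ≤ L, a + i ∈ A

/-- A subset of ℕ is syndetic if it has bounded gaps. -/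
def Syndetic (A : Set ℕ) : Prop := ∃ b : ℕ, ∀ n : ℕ, ∃ m ∈ A, n ≤ m ∧ m ≤ n + b

/-- A subset of ℕ is piecewise syndetic if finitely many translates cover a thick set. -/
def PiecewiseSyndetic (A : Set ℕ) : Prop :=
  ∃ b : ℕ, Thick (⋃ i ∈ Set.Iic b, (fun a => a + i) '' A)

theorem blockFamily_syndetic_subset_piecewiseSyndetic (A : Set ℕ)
    (hA : A ∈ blockFamily {F : Set ℕ | Syndetic F}) :
    PiecewiseSyndetic A := by
  obtain ⟨F, hF, hTr⟩ := hA
  obtain ⟨b, hb⟩ := hF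
  refine ⟨b, fun L => ?_⟩
  choose g hgF hgl hgu using hb
  have hsub : ↑((Finset.range (L+1)).image g) ⊆ F := by
    intro x hx
    simp only [Finset.coe_image, Set.mem_image] at hx
    obtain ⟨j, _, rfl⟩ := hx
    exact hgF j
  obtain ⟨n, hn⟩ := hTr _ hsub
  refine ⟨n + b, fun i hi => ?_⟩
  have hgi : g i + n ∈ A := hn _ (Finset.mem_image_of_mem g (Finset.mem_range.mpr (Nat.lt_succ_of_le hi)))
  have h1 := hgl i
  have h2 := hgu i
  exact Set.mem_biUnion (show i + b - g i ∈ Set.Iic b by simp only [Set.mem_Iic]; omega)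
    ⟨g i + n, hgi, show g i + n + (i + b - g i) = n + b + i by omega⟩
end

section
/- Every piecewise syndetic subset of ℕ belongs to the block family of the syndetic sets: if A is piecewise syndetic, then there exists a syndetic set F such that every finite subset of F has a translate contained in A. -/
theorem piecewiseSyndetic_mem_blockFamily_syndetic (A : Set ℕ)
    (hA : PiecewiseSyndetic A) :
    ∃ F : Set ℕ, Syndetic F ∧ ∀ R : Finset ℕ, ↑R ⊆ F → ∃ n, ∀ r ∈ R, r + n ∈ A := by
  obtain ⟨b, hT⟩ := hA
  choose a ha using hT
  -- key: within any long enough block, A (translated by a L) meets every window of length b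
  have key : ∀ L n : ℕ, n + b ≤ L → ∃ m, n ≤ m ∧ m ≤ n + b ∧ a L + m ∈ A := by
    intro L n hn
    have h := ha L (n + b) hn
    simp only [Set.mem_iUnion, Set.mem_image, Set.mem_Iic] at h
    obtain ⟨j, hj, x, hx, hxj⟩ := h
    refine ⟨n + b - j, by omega, by omega, ?_⟩
    have : a L + (n + b - j) = x := by omega
    rwa [this]
  set U : Ultrafilter ℕ := Filter.hyperfilter ℕ with hU
  refine ⟨{k | {L | a L + k ∈ A} ∈ U}, ⟨b, ?_⟩, ?_⟩
  · intro n
    have hbig : (⋃ m ∈ (Finset.Icc n (n + b) : Set ℕ), {L | a L + m ∈ A}) ∈ U := by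
      apply Filter.mem_of_superset
        (Filter.mem_hyperfilter_of_finite_compl (s := {L | n + b ≤ L}) ?_)
      · intro L hL
        obtain ⟨m, hm1, hm2, hm3⟩ := key L n hL
        simp only [Set.mem_iUnion, Finset.mem_coe, Finset.mem_Icc]
        exact ⟨m, ⟨hm1, hm2⟩, hm3⟩
      · apply Set.Finite.subset (Set.finite_Iio (n + b))
        intro L hL
        simp only [Set.mem_compl_iff, Set.mem_setOf_eq, not_le] at hL
        simpa [Set.mem_Iio] using hL
    rw [Ultrafilter.finite_biUnion_mem_iff (Finset.Icc n (n + b)).finite_toSet] at hbig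
    obtain ⟨m, hm, hmU⟩ := hbig
    rw [Finset.mem_coe, Finset.mem_Icc] at hm
    exact ⟨m, hmU, hm.1, hm.2⟩
  · intro R hR
    have hinter : (⋂ r ∈ R, {L | a L + r ∈ A}) ∈ U :=
      (Filter.biInter_mem R.finite_toSet).mpr fun r hr => hR hr
    obtain ⟨L, hL⟩ := Filter.nonempty_of_mem hinter
    refine ⟨a L, fun r hr => ?_⟩
    have := Set.mem_iInter₂.mp hL r hr
    rwa [add_comm]
end

section
/- The block family of the family of sets containing an infinite arithmetic progression equals the family of sets containing arbitrarily long arithmetic progressions with bounded common difference: b(IAP) = APb. -/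
/-- The family of sets containing an infinite arithmetic progression. -/
def IAP : Set (Set ℕ) :=
  {A | ∃ a d : ℕ, 1 ≤ d ∧ ∀ k : ℕ, a + k * d ∈ A}

/-- The family of sets containing arbitrarily long arithmetic progressions
with bounded common difference. -/
def APb : Set (Set ℕ) :=
  {A | ∃ d : ℕ, 1 ≤ d ∧ ∀ L : ℕ, ∃ a d' : ℕ, 1 ≤ d' ∧ d' ≤ d ∧ ∀ k < L, a + k * d' ∈ A}

theorem blockFamily_IAP_eq_APb : blockFamily IAP = APb := by
  ext S
  constructor
  · rintro ⟨A, ⟨a, d, hd, hA⟩, hR⟩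
    refine ⟨d, hd, fun L => ?_⟩
    obtain ⟨n, hn⟩ := hR ((Finset.range L).image (fun k => a + k * d)) (by
      intro x hx
      simp only [Finset.coe_image, Set.mem_image, Finset.mem_coe, Finset.mem_range] at hx
      obtain ⟨k, -, rfl⟩ := hx
      exact hA k)
    refine ⟨a + n, d, hd, le_refl d, fun k hk => ?_⟩
    have := hn (a + k * d) (Finset.mem_image.mpr ⟨k, Finset.mem_range.mpr hk, rfl⟩)
    rwa [show a + n + k * d = a + k * d + n from by ring]
  · rintro ⟨d, hd, h⟩
    refine ⟨{x | d.factorial ∣ x}, ⟨0, d.factorial, Nat.one_le_iff_ne_zero.mpr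
      (Nat.factorial_ne_zero d), fun k => ⟨k, by ring⟩⟩, fun R hRA => ?_⟩
    obtain ⟨a, d', h1, h2, h3⟩ := h (R.sup id + 1)
    refine ⟨a, fun r hr => ?_⟩
    have hdvd : d.factorial ∣ r := hRA (Finset.mem_coe.mpr hr)
    have hd'r : d' ∣ r := dvd_trans (Nat.dvd_factorial h1 h2) hdvd
    obtain ⟨k, hk⟩ := hd'r
    have hrM : r ≤ R.sup id := Finset.le_sup (f := id) hr
    have hkr : k ≤ r := by nlinarith
    have := h3 k (by omega)
    have hrw : a + k * d' = r + a := by rw [hk]; ring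
    rwa [hrw] at this
end

section
/- Let T be a continuous linear operator on a topological vector space X (or more generally a continuous self-map of a topological space), let 𝓕 be a Furstenberg family with block family b𝓕. If T is hypercyclic and for every nonempty open set U there exists x with N(x,U) = {n : Tⁿx ∈ U} ∈ 𝓕, then every hypercyclic vector x satisfies N(x,U) ∈ b𝓕 for every nonempty open set U. In particular, if 𝓕 is a block family (b𝓕 = 𝓕), then T hypercyclic with the 𝓟_𝓕 property implies T is 𝓕-hypercyclic. -/
theorem hypercyclic_and_PF_implies_bF_hypercyclic
    {X : Type*} [TopologicalSpace X] (T : X → X) (hT : Continuous T)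
    (F : Set (Set ℕ)) (hF : ∀ A ∈ F, ∀ B : Set ℕ, A ⊆ B → B ∈ F)
    (hhc : ∃ x : X, Dense (Set.range fun n => T^[n] x))
    (hPF : ∀ U : Set X, IsOpen U → U.Nonempty → ∃ y : X, {n : ℕ | T^[n] y ∈ U} ∈ F) :
    (∀ x : X, Dense (Set.range fun n => T^[n] x) →
      ∀ U : Set X, IsOpen U → U.Nonempty → {n : ℕ | T^[n] x ∈ U} ∈ blockFamily F) ∧
    (blockFamily F = F →
      ∃ x : X, Dense (Set.range fun n => T^[n] x) ∧
        ∀ U : Set X, IsOpen U → U.Nonempty → {n : ℕ | T^[n] x ∈ U} ∈ F) := by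
  have main : ∀ x : X, Dense (Set.range fun n => T^[n] x) →
      ∀ U : Set X, IsOpen U → U.Nonempty → {n : ℕ | T^[n] x ∈ U} ∈ blockFamily F := by
    intro x hx U hU hUne
    obtain ⟨y, hy⟩ := hPF U hU hUne
    refine ⟨_, hy, ?_⟩
    intro R hR
    -- V = ⋂ r ∈ R, T^[r] ⁻¹' U is open and contains y
    set V : Set X := ⋂ r ∈ R, T^[r] ⁻¹' U with hV
    have hVopen : IsOpen V := by
      apply isOpen_biInter_finset
      intro r _
      exact (hT.iterate r).isOpen_preimage U hU
    have hyV : y ∈ V := by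
      simp only [hV, Set.mem_iInter, Set.mem_preimage]
      intro r hr
      exact hR hr
    obtain ⟨z, ⟨n, hn⟩, hzV⟩ := hx.exists_mem_open hVopen ⟨y, hyV⟩
    refine ⟨n, fun r hr => ?_⟩
    have : T^[n] x ∈ V := by simpa [← hn] using hzV
    have hrU : T^[r] (T^[n] x) ∈ U := by
      simp only [hV, Set.mem_iInter, Set.mem_preimage] at this
      exact this r hr
    show T^[r + n] x ∈ U
    rwa [Function.iterate_add_apply]
  refine ⟨main, fun hbF => ?_⟩
  obtain ⟨x, hx⟩ := hhc
  exact ⟨x, hx, fun U hU hUne => hbF ▸ main x hx U hU hUne⟩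
end

section
/- Let 𝓕 be an upper Furstenberg family with decomposition 𝓕 = ⋃_{δ∈D} ⋂_{m∈M} 𝓕_{δ,m} where each 𝓕_{δ,m} is finitely hereditarily upward, and suppose each 𝓕_{δ,m} is translation invariant (A ∈ 𝓕_{δ,m} ⟹ A + k ∈ 𝓕_{δ,m}). Then A ∈ 𝓕 if and only if there exist δ ∈ D, natural numbers k_m, and finite sets R_m ∈ 𝓕_{δ,m} with k_m + R_m ⊆ A for every m ∈ M. -/
theorem upper_family_mem_iff_finite_blocks
    {D M : Type*} [Countable M] (Fdm : D → M → Set (Set ℕ))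
    -- each 𝓕_{δ,m} is finitely hereditarily upward
    (hfin : ∀ (δ : D) (m : M), ∀ A ∈ Fdm δ m,
      ∃ F : Finset ℕ, ∀ B : Set ℕ, (↑F ∩ A : Set ℕ) ⊆ B → B ∈ Fdm δ m)
    -- each 𝓕_{δ,m} is translation invariant
    (hinv : ∀ (δ : D) (m : M), ∀ A ∈ Fdm δ m, ∀ k : ℕ,
      (fun x => x + k) '' A ∈ Fdm δ m)
    (A : Set ℕ) :
    (∃ δ : D, ∀ m : M, A ∈ Fdm δ m) ↔
      (∃ (δ : D) (k : M → ℕ) (R : M → Finset ℕ),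
        (∀ m, (↑(R m) : Set ℕ) ∈ Fdm δ m) ∧ ∀ m, ∀ r ∈ R m, k m + r ∈ A) := by
  classical
  constructor
  · rintro ⟨δ, hA⟩
    choose F hF using fun m => hfin δ m A (hA m)
    refine ⟨δ, fun _ => 0, fun m => (F m).filter (· ∈ A), fun m => ?_, fun m r hr => ?_⟩
    · apply hF m
      intro x hx
      simp only [Finset.coe_filter, Set.mem_inter_iff, Finset.mem_coe] at hx ⊢
      exact ⟨hx.1, hx.2⟩
    · simp only [Finset.mem_filter] at hr
      simpa using hr.2
  · rintro ⟨δ, k, R, hR, hsub⟩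
    refine ⟨δ, fun m => ?_⟩
    have h1 : (fun x => x + k m) '' (↑(R m) : Set ℕ) ∈ Fdm δ m :=
      hinv δ m _ (hR m) (k m)
    obtain ⟨F, hF⟩ := hfin δ m _ h1
    apply hF
    intro x hx
    obtain ⟨_, r, hr, rfl⟩ := hx
    simpa [Nat.add_comm] using hsub m r hr
end

section
/- Let X be a Banach space with a normalized unconditional Schauder basis (e_n)_{n≥1} on which the backward shift B (Be₁ = 0, Be_n = e_{n−1}) is bounded, and suppose B has the 𝓟_Syn property, i.e., for every nonempty open U there is x with {n : Bⁿx ∈ U} syndetic. Then Σ_n e_n converges in X (equivalently, B is chaotic). -/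
open Filter Topology

section Aux
variable {X : Type*} [NormedAddCommGroup X] [NormedSpace ℝ X]

/-- Finite partial sums of a summable family are uniformly bounded. -/
lemma finsetSum_bounded_of_summable [CompleteSpace X] {f : ℕ → X} (hf : Summable f) :
    ∃ C : ℝ, ∀ F : Finset ℕ, ‖∑ n ∈ F, f n‖ ≤ C := by
  classical
  obtain ⟨s, hs⟩ := summable_iff_vanishing_norm.1 hf 1 one_pos
  refine ⟨(∑ n ∈ s, ‖f n‖) + 1, fun F => ?_⟩
  have hsplit : ∑ n ∈ F, f n = (∑ n ∈ F ∩ s, f n) + ∑ n ∈ F \ s, f n :=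
    (Finset.sum_inter_add_sum_sdiff F s f).symm
  rw [hsplit]
  refine (norm_add_le _ _).trans (add_le_add ?_ ?_)
  · refine (norm_sum_le _ _).trans ?_
    exact Finset.sum_le_sum_of_subset_of_nonneg (Finset.inter_subset_right)
      (fun n _ _ => norm_nonneg _)
  · exact (hs _ Finset.sdiff_disjoint).le

/-- Convexity: a [0,1]-combination is dominated by some subset sum. -/
lemma convex_subset_bound (f : ℕ → X) (F : Finset ℕ) : ∀ (v : X) (c : ℕ → ℝ),
    (∀ n ∈ F, 0 ≤ c n ∧ c n ≤ 1) →
    ∃ G ⊆ F, ‖v + ∑ n ∈ F, c n • f n‖ ≤ ‖v + ∑ n ∈ G, f n‖ := by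
  classical
  induction F using Finset.induction_on with
  | empty =>
    intro v c _
    exact ⟨∅, Finset.Subset.refl _, le_refl _⟩
  | @insert a F ha ih =>
    intro v c hc
    have hca := hc a (Finset.mem_insert_self a F)
    have hcF : ∀ n ∈ F, 0 ≤ c n ∧ c n ≤ 1 :=
      fun n hn => hc n (Finset.mem_insert_of_mem hn)
    obtain ⟨G₁, hG₁, h1⟩ := ih v c hcF
    obtain ⟨G₂, hG₂, h2⟩ := ih (v + f a) c hcF
    set t := c a with ht
    have key : v + ∑ n ∈ insert a F, c n • f n
        = (1 - t) • (v + ∑ n ∈ F, c n • f n) + t • ((v + f a) + ∑ n ∈ F, c n • f n) := by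
      rw [Finset.sum_insert ha]
      module
    have hbound : ‖v + ∑ n ∈ insert a F, c n • f n‖
        ≤ (1 - t) * ‖v + ∑ n ∈ F, c n • f n‖ + t * ‖(v + f a) + ∑ n ∈ F, c n • f n‖ := by
      rw [key]
      refine (norm_add_le _ _).trans ?_
      rw [norm_smul, norm_smul, Real.norm_eq_abs, Real.norm_eq_abs,
        abs_of_nonneg (by linarith [hca.2] : (0:ℝ) ≤ 1 - t), abs_of_nonneg hca.1]
    have haG₂ : a ∉ G₂ := fun h => ha (hG₂ h)
    have h2' : ‖(v + f a) + ∑ n ∈ G₂, f n‖ = ‖v + ∑ n ∈ insert a G₂, f n‖ := by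
      rw [Finset.sum_insert haG₂]
      congr 1
      abel
    by_cases hcmp : ‖v + ∑ n ∈ G₁, f n‖ ≤ ‖v + ∑ n ∈ insert a G₂, f n‖
    · refine ⟨insert a G₂, Finset.insert_subset_insert a hG₂, ?_⟩
      have := h2.trans_eq h2'
      nlinarith [hca.1, hca.2, h1, norm_nonneg (v + ∑ n ∈ G₁, f n)]
    · refine ⟨G₁, hG₁.trans (Finset.subset_insert a F), ?_⟩
      push_neg at hcmp
      have := h2.trans_eq h2'
      nlinarith [hca.1, hca.2, norm_nonneg (v + ∑ n ∈ insert a G₂, f n)]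

/-- Bounded multiplier theorem for unconditionally summable families. -/
lemma summable_smul_of_nonneg_bounded [CompleteSpace X] {f : ℕ → X} (hf : Summable f)
    {c : ℕ → ℝ} {M : ℝ} (hc : ∀ n, 0 ≤ c n ∧ c n ≤ M) :
    Summable fun n => c n • f n := by
  classical
  have hM0 : (0:ℝ) ≤ M := le_trans (hc 0).1 (hc 0).2
  set K : ℝ := M + 1 with hK
  have hKpos : 0 < K := by linarith
  rw [summable_iff_vanishing_norm]
  intro ε hε
  obtain ⟨s, hs⟩ := summable_iff_vanishing_norm.1 hf (ε / K) (div_pos hε hKpos)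
  refine ⟨s, fun t hts => ?_⟩
  have hd : ∀ n ∈ t, 0 ≤ c n / K ∧ c n / K ≤ 1 := by
    intro n _
    constructor
    · exact div_nonneg (hc n).1 hKpos.le
    · rw [div_le_one hKpos]
      linarith [(hc n).2]
  obtain ⟨G, hGt, hG⟩ := convex_subset_bound f t 0 (fun n => c n / K) hd
  have hGs : Disjoint G s := Finset.disjoint_left.2 fun n hn hns =>
    (Finset.disjoint_left.1 hts) (hGt hn) hns
  have hsum : ∑ n ∈ t, c n • f n = K • ∑ n ∈ t, (c n / K) • f n := by
    rw [Finset.smul_sum]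
    refine Finset.sum_congr rfl fun n _ => ?_
    rw [smul_smul, mul_div_cancel₀ _ hKpos.ne']
  rw [hsum, norm_smul, Real.norm_eq_abs, abs_of_pos hKpos]
  calc K * ‖∑ n ∈ t, (c n / K) • f n‖ ≤ K * ‖∑ n ∈ G, f n‖ := by
        have := hG
        simp only [zero_add] at this
        exact mul_le_mul_of_nonneg_left this hKpos.le
    _ < K * (ε / K) := by
        exact (mul_lt_mul_iff_right₀ hKpos).2 (hs G hGs)
    _ = ε := by field_simp

end Aux

/-- A normalized sequence in a Banach space. -/
structure NormBasis (X : Type*) [NormedAddCommGroup X] [NormedSpace ℝ X] where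
  e : ℕ → X
  hnorm : ∀ n, ‖e n‖ = 1

set_option linter.unusedSectionVars false

namespace NormBasis

variable {X : Type*} [NormedAddCommGroup X] [NormedSpace ℝ X] [CompleteSpace X]
  (E : NormBasis X)

/-- The space of coefficient sequences with summable expansion. -/
structure Coef : Type _ where
  a : ℕ → ℝ
  smm : Summable fun n => a n • E.e n

namespace Coef

variable {E}

@[ext] lemma ext {g h : E.Coef} (h' : g.a = h.a) : g = h := by
  cases g; cases h; simpa using h'

instance : Zero E.Coef := ⟨⟨0, by simpa using summable_zero⟩⟩
instance : Add E.Coef :=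
  ⟨fun g h => ⟨g.a + h.a, by
    have := g.smm.add h.smm
    simpa [add_smul] using this⟩⟩
instance : Neg E.Coef :=
  ⟨fun g => ⟨-g.a, by
    have := g.smm.neg
    simpa [neg_smul] using this⟩⟩
instance : Sub E.Coef :=
  ⟨fun g h => ⟨g.a - h.a, by
    have := g.smm.sub h.smm
    simpa [sub_smul] using this⟩⟩
instance : SMul ℝ E.Coef :=
  ⟨fun c g => ⟨c • g.a, by
    have := g.smm.const_smul c
    simpa [smul_smul] using this⟩⟩
instance : SMul ℕ E.Coef :=
  ⟨fun c g => ⟨c • g.a, by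
    have := g.smm.const_smul (c : ℝ)
    have h2 : (fun n => (c : ℝ) • (g.a n • E.e n)) = fun n => (c • g.a) n • E.e n := by
      funext n
      simp [smul_smul]
    rwa [h2] at this⟩⟩
instance : SMul ℤ E.Coef :=
  ⟨fun c g => ⟨c • g.a, by
    have := g.smm.const_smul (c : ℝ)
    have h2 : (fun n => (c : ℝ) • (g.a n • E.e n)) = fun n => (c • g.a) n • E.e n := by
      funext n
      simp [smul_smul]
    rwa [h2] at this⟩⟩

@[simp] lemma zero_a : (0 : E.Coef).a = 0 := rfl
@[simp] lemma add_a (g h : E.Coef) : (g + h).a = g.a + h.a := rfl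
@[simp] lemma neg_a (g : E.Coef) : (-g).a = -g.a := rfl
@[simp] lemma sub_a (g h : E.Coef) : (g - h).a = g.a - h.a := rfl
@[simp] lemma smul_a (c : ℝ) (g : E.Coef) : (c • g).a = c • g.a := rfl

lemma a_injective : Function.Injective (Coef.a : E.Coef → ℕ → ℝ) :=
  fun _ _ h => ext h

instance : AddCommGroup E.Coef :=
  a_injective.addCommGroup _ rfl (fun _ _ => rfl) (fun _ => rfl) (fun _ _ => rfl)
    (fun _ _ => rfl) (fun _ _ => rfl)

instance : Module ℝ E.Coef :=
  a_injective.module ℝ ⟨⟨Coef.a, rfl⟩, fun _ _ => rfl⟩ (fun _ _ => rfl)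

variable (g : E.Coef)

lemma bddAbove : BddAbove (Set.range fun F : Finset ℕ => ‖∑ n ∈ F, g.a n • E.e n‖) := by
  obtain ⟨C, hC⟩ := finsetSum_bounded_of_summable g.smm
  exact ⟨C, by rintro x ⟨F, rfl⟩; exact hC F⟩

noncomputable instance : NormedAddCommGroup E.Coef :=
  AddGroupNorm.toNormedAddCommGroup
  { toFun := fun g => ⨆ F : Finset ℕ, ‖∑ n ∈ F, g.a n • E.e n‖
    map_zero' := by simp
    add_le' := by
      intro g h
      refine ciSup_le fun F => ?_
      calc ‖∑ n ∈ F, (g + h).a n • E.e n‖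
          ≤ ‖∑ n ∈ F, g.a n • E.e n‖ + ‖∑ n ∈ F, h.a n • E.e n‖ := by
            rw [add_a]
            simp only [Pi.add_apply, add_smul, Finset.sum_add_distrib]
            exact norm_add_le _ _
        _ ≤ _ := add_le_add (le_ciSup g.bddAbove F) (le_ciSup h.bddAbove F)
    neg' := by
      intro g
      have h : ∀ F : Finset ℕ, ‖∑ n ∈ F, (-g).a n • E.e n‖ = ‖∑ n ∈ F, g.a n • E.e n‖ := by
        intro F
        rw [neg_a]
        simp only [Pi.neg_apply, neg_smul, Finset.sum_neg_distrib, norm_neg]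
      simp only [h]
    eq_zero_of_map_eq_zero' := by
      intro g hg
      ext1
      funext n
      have h1 : ‖∑ m ∈ {n}, g.a m • E.e m‖ ≤ 0 := hg ▸ le_ciSup g.bddAbove {n}
      simp only [Finset.sum_singleton, norm_smul, E.hnorm n, mul_one] at h1
      simpa using le_antisymm h1 (norm_nonneg _) }

lemma norm_def : ‖g‖ = ⨆ F : Finset ℕ, ‖∑ n ∈ F, g.a n • E.e n‖ := rfl

lemma sum_le_norm (F : Finset ℕ) : ‖∑ n ∈ F, g.a n • E.e n‖ ≤ ‖g‖ :=
  le_ciSup g.bddAbove F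

lemma norm_le_of (C : ℝ) (h : ∀ F : Finset ℕ, ‖∑ n ∈ F, g.a n • E.e n‖ ≤ C) : ‖g‖ ≤ C :=
  ciSup_le h

lemma abs_a_le (n : ℕ) : |g.a n| ≤ ‖g‖ := by
  have := g.sum_le_norm {n}
  simpa [norm_smul, E.hnorm n] using this

noncomputable instance : NormedSpace ℝ E.Coef :=
  ⟨by
    intro c g
    refine ciSup_le fun F => ?_
    have : ‖∑ n ∈ F, (c • g).a n • E.e n‖ = ‖c‖ * ‖∑ n ∈ F, g.a n • E.e n‖ := by
      rw [smul_a]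
      simp only [Pi.smul_apply, smul_eq_mul, ← smul_smul, ← Finset.smul_sum]
      exact norm_smul c _
    rw [this]
    exact mul_le_mul_of_nonneg_left (g.sum_le_norm F) (norm_nonneg c)⟩

set_option maxHeartbeats 2000000 in
instance : CompleteSpace E.Coef := by
  refine Metric.complete_of_cauchySeq_tendsto fun u hu => ?_
  have hcau : ∀ ε > (0:ℝ), ∃ N, ∀ k ≥ N, ∀ l ≥ N, ‖u k - u l‖ < ε := by
    intro ε hε
    obtain ⟨N, hN⟩ := Metric.cauchySeq_iff.1 hu ε hε
    exact ⟨N, fun k hk l hl => by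
      have := hN k hk l hl
      rwa [dist_eq_norm] at this⟩
  have hcoord : ∀ n, ∃ r : ℝ, Tendsto (fun k => (u k).a n) atTop (𝓝 r) := by
    intro n
    have hc : CauchySeq fun k => (u k).a n := by
      rw [Metric.cauchySeq_iff]
      intro ε hε
      obtain ⟨N, hN⟩ := hcau ε hε
      refine ⟨N, fun k hk l hl => ?_⟩
      have h1 : |(u k).a n - (u l).a n| ≤ ‖u k - u l‖ := by
        have := (u k - u l).abs_a_le n
        simpa [sub_a] using this
      calc dist ((u k).a n) ((u l).a n) = |(u k).a n - (u l).a n| := Real.dist_eq _ _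
        _ ≤ ‖u k - u l‖ := h1
        _ < ε := hN k hk l hl
    exact cauchySeq_tendsto_of_complete hc
  choose r hr using hcoord
  have hkey : ∀ ε > (0:ℝ), ∃ N, ∀ k ≥ N, ∀ F : Finset ℕ,
      ‖∑ n ∈ F, ((u k).a n - r n) • E.e n‖ ≤ ε := by
    intro ε hε
    obtain ⟨N, hN⟩ := hcau ε hε
    refine ⟨N, fun k hk F => ?_⟩
    have hlim : Tendsto (fun l => ‖∑ n ∈ F, ((u k).a n - (u l).a n) • E.e n‖) atTop
        (𝓝 ‖∑ n ∈ F, ((u k).a n - r n) • E.e n‖) := by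
      refine Tendsto.norm ?_
      refine tendsto_finset_sum F fun n _ => ?_
      exact (tendsto_const_nhds.sub (hr n)).smul tendsto_const_nhds
    refine le_of_tendsto hlim ?_
    filter_upwards [Filter.eventually_ge_atTop N] with l hl
    have hb : ‖∑ n ∈ F, ((u k).a n - (u l).a n) • E.e n‖ ≤ ‖u k - u l‖ := by
      have := (u k - u l).sum_le_norm F
      simpa [sub_a] using this
    exact hb.trans (hN k hk l hl).le
  have hrsum : Summable fun n => r n • E.e n := by
    rw [summable_iff_vanishing_norm]
    intro ε hε
    obtain ⟨N, hN⟩ := hkey (ε/2) (by linarith)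
    obtain ⟨s, hs⟩ := summable_iff_vanishing_norm.1 (u N).smm (ε/2) (by linarith)
    refine ⟨s, fun t hts => ?_⟩
    have h1 : ∑ n ∈ t, r n • E.e n
        = ∑ n ∈ t, (r n - (u N).a n) • E.e n + ∑ n ∈ t, (u N).a n • E.e n := by
      rw [← Finset.sum_add_distrib]
      refine Finset.sum_congr rfl fun n _ => ?_
      rw [← add_smul, sub_add_cancel]
    rw [h1]
    have h2 : ‖∑ n ∈ t, (r n - (u N).a n) • E.e n‖ ≤ ε/2 := by
      have hNt := hN N le_rfl t
      have hneg : ∑ n ∈ t, (r n - (u N).a n) • E.e n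
          = -∑ n ∈ t, ((u N).a n - r n) • E.e n := by
        rw [← Finset.sum_neg_distrib]
        refine Finset.sum_congr rfl fun n _ => by rw [← neg_smul, neg_sub]
      rw [hneg, norm_neg]
      exact hNt
    have h3 := hs t hts
    calc ‖∑ n ∈ t, (r n - (u N).a n) • E.e n + ∑ n ∈ t, (u N).a n • E.e n‖
        ≤ ‖∑ n ∈ t, (r n - (u N).a n) • E.e n‖ + ‖∑ n ∈ t, (u N).a n • E.e n‖ :=
          norm_add_le _ _
      _ < ε := by linarith
  refine ⟨⟨r, hrsum⟩, ?_⟩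
  rw [NormedAddCommGroup.tendsto_atTop]
  intro ε hε
  obtain ⟨N, hN⟩ := hkey (ε/2) (by linarith)
  refine ⟨N, fun k hk => ?_⟩
  have hle : ‖u k - ⟨r, hrsum⟩‖ ≤ ε/2 := by
    refine (u k - ⟨r, hrsum⟩).norm_le_of _ fun F => ?_
    have := hN k hk F
    simpa [sub_a] using this
  linarith

end Coef

end NormBasis

set_option maxHeartbeats 4000000 in
theorem backward_shift_PSyn_implies_chaotic
    {X : Type*} [NormedAddCommGroup X] [NormedSpace ℝ X] [CompleteSpace X]
    (e : ℕ → X) (hnorm : ∀ n, ‖e n‖ = 1)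
    -- (e n) is an unconditional Schauder basis: every vector has a unique
    -- unconditionally convergent expansion
    (hbasis : ∀ x : X, ∃! a : ℕ → ℝ, HasSum (fun n => a n • e n) x)
    -- B is the backward shift with respect to the basis
    (B : X →L[ℝ] X) (hB0 : B (e 0) = 0) (hBs : ∀ n, B (e (n + 1)) = e n)
    -- B has the 𝓟_Syn property
    (hSyn : ∀ U : Set X, IsOpen U → U.Nonempty →
      ∃ x : X, Syndetic {n : ℕ | (B ^ n) x ∈ U}) :
    Summable e := by
  classical
  set E : NormBasis X := ⟨e, hnorm⟩ with hE
  have hEe : E.e = e := rfl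
  -- The synthesis operator as a linear map
  have hsum_eq : ∀ (g : E.Coef) (y : X), HasSum (fun n => g.a n • e n) y →
      (∑' n, g.a n • E.e n) = y := by
    intro g y h
    rw [hEe]
    exact h.tsum_eq
  have hSmm : ∀ g : E.Coef, HasSum (fun n => g.a n • e n) (∑' n, g.a n • E.e n) := by
    intro g
    rw [hEe]
    exact (by rw [← hEe]; exact g.smm : Summable fun n => g.a n • e n).hasSum
  set S₀ : E.Coef →ₗ[ℝ] X :=
    { toFun := fun g => ∑' n, g.a n • E.e n
      map_add' := by
        intro g h
        refine hsum_eq _ _ ?_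
        have h1 := (hSmm g).add (hSmm h)
        have heq : (fun n => g.a n • e n + h.a n • e n) = fun n => (g + h).a n • e n := by
          funext n
          simp [add_smul]
        rwa [heq] at h1
      map_smul' := by
        intro c g
        refine hsum_eq _ _ ?_
        have h1 := (hSmm g).const_smul c
        have heq : (fun n => c • (g.a n • e n)) = fun n => (c • g).a n • e n := by
          funext n
          simp [smul_smul]
        rwa [heq] at h1 } with hS₀
  have hS₀app : ∀ g : E.Coef, HasSum (fun n => g.a n • e n) (S₀ g) := fun g => hSmm g
  have hS₀bound : ∀ g : E.Coef, ‖S₀ g‖ ≤ 1 * ‖g‖ := by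
    intro g
    rw [one_mul]
    have ht : Tendsto (fun N => ∑ n ∈ Finset.range N, g.a n • e n) atTop (𝓝 (S₀ g)) :=
      (hS₀app g).tendsto_sum_nat
    refine le_of_tendsto ht.norm ?_
    filter_upwards with N
    have := g.sum_le_norm (Finset.range N)
    rwa [hEe] at this
  set S : E.Coef →L[ℝ] X := S₀.mkContinuous 1 hS₀bound with hSdef
  have hSapp : ∀ g : E.Coef, HasSum (fun n => g.a n • e n) (S g) := hS₀app
  -- bijectivity
  have hker : S.ker = ⊥ := by
    rw [LinearMap.ker_eq_bot]
    intro g h (hgh : S g = S h)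
    have h1 := hSapp g
    have h2 := hSapp h
    rw [hgh] at h1
    have := (hbasis (S h)).unique h1 h2
    exact NormBasis.Coef.ext this
  have hrange : S.range = ⊤ := by
    rw [LinearMap.range_eq_top]
    intro x
    obtain ⟨a, ha, -⟩ := hbasis x
    have hsm : Summable fun n => a n • E.e n := by rw [hEe]; exact ha.summable
    refine ⟨⟨a, hsm⟩, ?_⟩
    exact HasSum.unique (hSapp ⟨a, hsm⟩) ha
  set Teq : E.Coef ≃L[ℝ] X := ContinuousLinearEquiv.ofBijective S hker hrange with hTeq
  set T : X →L[ℝ] E.Coef := (Teq.symm : X →L[ℝ] E.Coef) with hT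
  have hTS : ∀ x : X, S (T x) = x := by
    intro x
    have : Teq (Teq.symm x) = x := Teq.apply_symm_apply x
    exact this
  have hThs : ∀ x : X, HasSum (fun n => (T x).a n • e n) x := by
    intro x
    have := hSapp (T x)
    rwa [hTS x] at this
  have huniq : ∀ (x : X) (a' : ℕ → ℝ), HasSum (fun n => a' n • e n) x → a' = (T x).a := by
    intro x a' h
    exact (hbasis x).unique h (hThs x)
  set K : ℝ := ‖T‖ with hK
  have hKnn : 0 ≤ K := norm_nonneg _
  have hcoef_bound : ∀ (x : X) (n : ℕ), |(T x).a n| ≤ K * ‖x‖ := by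
    intro x n
    have h1 := (T x).abs_a_le n
    exact h1.trans (T.le_opNorm x)
  -- the shift of coefficients
  have hshift : ∀ (j : ℕ) (x : X) (aa : ℕ → ℝ), HasSum (fun n => aa n • e n) x →
      HasSum (fun n => aa (n + j) • e n) ((B ^ j) x) := by
    intro j
    induction j with
    | zero => intro x aa h; simpa using h
    | succ j ih =>
      intro x aa h
      have h1 : HasSum (fun n => aa n • B (e n)) (B x) := by
        have := B.hasSum h
        simpa [map_smul] using this
      have h2 : HasSum (fun n => aa (n + 1) • B (e (n + 1))) (B x) := by
        have h3 := (hasSum_nat_add_iff' (f := fun n => aa n • B (e n)) 1).2 h1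
        simpa [hB0] using h3
      have h2' : HasSum (fun n => aa (n + 1) • e n) (B x) := by
        have heq : (fun n => aa (n + 1) • B (e (n + 1))) = fun n => aa (n + 1) • e n := by
          funext n
          rw [hBs]
        rwa [heq] at h2
      have hpow : (B ^ (j + 1)) x = (B ^ j) (B x) := by
        rw [pow_succ, ContinuousLinearMap.mul_apply]
      rw [hpow]
      exact ih (B x) (fun m => aa (m + 1)) h2'
  have hBpow : ∀ (j n : ℕ), (B ^ j) (e (n + j)) = e n := by
    intro j
    induction j with
    | zero => intro n; simp
    | succ j ih =>
      intro n
      have hpow : (B ^ (j + 1)) (e (n + (j + 1))) = (B ^ j) (B (e (n + j + 1))) := by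
        rw [pow_succ]
        rfl
      rw [hpow, hBs, ih]
  -- apply the hypothesis
  set ε : ℝ := 1 / (2 * (K + 1)) with hεdef
  have hεpos : 0 < ε := by positivity
  obtain ⟨x, hx⟩ := hSyn (Metric.ball (e 0) ε) Metric.isOpen_ball
    ⟨e 0, Metric.mem_ball_self hεpos⟩
  obtain ⟨b, hb⟩ := hx
  set A : Set ℕ := {n : ℕ | (B ^ n) x ∈ Metric.ball (e 0) ε} with hA
  set a : ℕ → ℝ := (T x).a with ha
  have hax : HasSum (fun n => a n • e n) x := hThs x
  -- coefficients on A are at least 1/2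
  have hA_half : ∀ n ∈ A, (1:ℝ)/2 ≤ a n := by
    intro n hn
    have hmem : ‖(B ^ n) x - e 0‖ < ε := by
      have := hn
      rw [hA, Set.mem_setOf_eq, Metric.mem_ball, dist_eq_norm] at this
      exact this
    -- coefficients of (B^n) x
    have hc1 : (fun k => a (k + n)) = (T ((B ^ n) x)).a :=
      huniq _ _ (hshift n x a hax)
    -- coefficients of e 0
    have he0 : HasSum (fun k => (if k = 0 then (1:ℝ) else 0) • e k) (e 0) := by
      have := hasSum_ite_eq 0 (e 0)
      have heq : (fun k => (if k = 0 then (1:ℝ) else 0) • e k)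
          = fun k => if k = 0 then e 0 else 0 := by
        funext k
        by_cases hk : k = 0
        · subst hk; simp
        · simp [hk]
      rwa [heq]
    have hc2 : (fun k => (if k = 0 then (1:ℝ) else 0)) = (T (e 0)).a := huniq _ _ he0
    have hsub : (T ((B ^ n) x - e 0)).a 0 = a n - 1 := by
      have : T ((B ^ n) x - e 0) = T ((B ^ n) x) - T (e 0) := map_sub T _ _
      rw [this]
      have h0 : (T ((B ^ n) x) - T (e 0)).a 0 = (T ((B ^ n) x)).a 0 - (T (e 0)).a 0 := by
        rw [NormBasis.Coef.sub_a]; rfl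
      rw [h0, ← hc1, ← hc2]
      simp
    have habs : |a n - 1| ≤ K * ε := by
      rw [← hsub]
      refine (hcoef_bound _ 0).trans ?_
      exact mul_le_mul_of_nonneg_left hmem.le hKnn
    have hKε : K * ε ≤ 1/2 := by
      rw [hεdef]
      have h5 : K * (1 / (2 * (K + 1))) = K / (2 * (K + 1)) := by ring
      rw [h5, div_le_div_iff₀ (by positivity) (by norm_num : (0:ℝ) < 2)]
      nlinarith
    have := abs_le.1 (habs.trans hKε)
    linarith [this.1]
  -- summability over A
  have hsumA : Summable (A.indicator fun n => a n • e n) := by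
    have h1 : Summable ((fun n => a n • e n) ∘ ((↑) : A → ℕ)) := hax.summable.subtype A
    exact summable_subtype_iff_indicator.1 h1
  have hsumAe : Summable (A.indicator e) := by
    have hc : ∀ n, 0 ≤ A.indicator (fun k => (a k)⁻¹) n ∧ A.indicator (fun k => (a k)⁻¹) n ≤ 2 := by
      intro n
      by_cases hn : n ∈ A
      · rw [Set.indicator_of_mem hn]
        have h2 := hA_half n hn
        constructor
        · positivity
        · rw [inv_le_comm₀ (by linarith) (by norm_num)]
          linarith
      · rw [Set.indicator_of_notMem hn]
        norm_num
    have h2 := summable_smul_of_nonneg_bounded hsumA hc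
    have heq : (fun n => A.indicator (fun k => (a k)⁻¹) n • A.indicator (fun k => a k • e k) n)
        = A.indicator e := by
      funext n
      by_cases hn : n ∈ A
      · rw [Set.indicator_of_mem hn, Set.indicator_of_mem hn, Set.indicator_of_mem hn,
          smul_smul, inv_mul_cancel₀ (by linarith [hA_half n hn]), one_smul]
      · simp [Set.indicator_of_notMem hn]
    rwa [heq] at h2
  -- shifted sets
  have hshift_sum : ∀ j : ℕ, Summable (Set.indicator {n : ℕ | n + j ∈ A} e) := by
    intro j
    have h1 : Summable fun n => (A.indicator e) (n + j) :=
      hsumAe.comp_injective (add_left_injective j)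
    have h2 : Summable fun n => (B ^ j) ((A.indicator e) (n + j)) := h1.mapL (B ^ j)
    have heq : (fun n => (B ^ j) ((A.indicator e) (n + j)))
        = Set.indicator {n : ℕ | n + j ∈ A} e := by
      funext n
      by_cases hn : n + j ∈ A
      · rw [Set.indicator_of_mem hn, Set.indicator_of_mem (by exact hn : n ∈ {n | n + j ∈ A}),
          hBpow]
      · rw [Set.indicator_of_notMem hn,
          Set.indicator_of_notMem (by exact hn : n ∉ {n | n + j ∈ A}), map_zero]
    rwa [heq] at h2
  -- summability of indicators over subsets
  have hindicator_mono : ∀ (s t : Set ℕ), t ⊆ s → Summable (s.indicator e) →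
      Summable (t.indicator e) := by
    intro s t hts hs
    have h1 : Summable ((s.indicator e) ∘ ((↑) : t → ℕ)) := hs.subtype t
    have h2 := summable_subtype_iff_indicator.1 h1
    have heq : t.indicator (s.indicator e) = t.indicator e := by
      funext n
      by_cases hn : n ∈ t
      · rw [Set.indicator_of_mem hn, Set.indicator_of_mem hn, Set.indicator_of_mem (hts hn)]
      · rw [Set.indicator_of_notMem hn, Set.indicator_of_notMem hn]
    rwa [heq] at h2
  -- union over j ≤ k
  have hunion : ∀ k : ℕ, Summable (Set.indicator {n : ℕ | ∃ j ≤ k, n + j ∈ A} e) := by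
    intro k
    induction k with
    | zero =>
      have heq : {n : ℕ | ∃ j ≤ 0, n + j ∈ A} = {n : ℕ | n + 0 ∈ A} := by
        ext n
        simp
      rw [heq]
      exact hshift_sum 0
    | succ k ih =>
      set Sk : Set ℕ := {n : ℕ | ∃ j ≤ k, n + j ∈ A} with hSk
      set Sk1 : Set ℕ := {n : ℕ | ∃ j ≤ k + 1, n + j ∈ A} with hSk1
      have hsub : Sk ⊆ Sk1 := by
        intro n hn
        obtain ⟨j, hj, hjA⟩ := hn
        exact ⟨j, by omega, hjA⟩
      have hsplit : Sk1 = Sk ∪ Sk1 \ Sk := (Set.union_diff_cancel hsub).symm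
      rw [hsplit, Set.indicator_union_of_disjoint disjoint_sdiff_self_right e]
      refine ih.add ?_
      have hsub2 : Sk1 \ Sk ⊆ {n : ℕ | n + (k + 1) ∈ A} := by
        intro n hn
        obtain ⟨⟨j, hj, hjA⟩, hnot⟩ := hn
        have hj1 : j = k + 1 := by
          by_contra hne
          exact hnot ⟨j, by omega, hjA⟩
        rw [← hj1]
        exact hjA
      exact hindicator_mono _ _ hsub2 (hshift_sum (k + 1))
  -- the cover
  have hcover : {n : ℕ | ∃ j ≤ b, n + j ∈ A} = Set.univ := by
    ext n
    simp only [Set.mem_setOf_eq, Set.mem_univ, iff_true]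
    obtain ⟨m, hm, hnm, hmb⟩ := hb n
    exact ⟨m - n, by omega, by rwa [show n + (m - n) = m by omega]⟩
  have := hunion b
  rwa [hcover, Set.indicator_univ] at this
end
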